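/- Let A be a commutative ring equipped with a ℤ-grading 𝒜 (GradedRing 𝒜) and let p be a homogeneous prime ideal of A. Then: (a) per_p(A) ≠ 0 if and only if there exist an integer n ≠ 0 and an element f ∈ 𝒜 n with f ∉ p; and (b) for every integer n ≠ 0 and every f ∈ 𝒜 n with f ∉ p, the integer per_p(A) is nonzero and divides n. -/

import Mathlib

/-- The local period of the `ℤ`-graded commutative ring `A` at a (homogeneous prime)
ideal `p`: the least `d > 0` for which there are homogeneous elements `a ∈ 𝒜 m`,
`s ∈ 𝒜 k` with `a ∉ p`, `s ∉ p` and `m - k = d`; it is `0` if no such `d` exists. -/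
noncomputable def localPeriod {A : Type*} [CommRing A]
    (𝒜 : ℤ → Submodule ℤ A) (p : Ideal A) : ℕ :=
  sInf {d : ℕ | 0 < d ∧ ∃ m k : ℤ, ∃ a ∈ 𝒜 m, ∃ s ∈ 𝒜 k,
    a ∉ p ∧ s ∉ p ∧ m - k = (d : ℤ)}

/-- Corollary 2.14, `sta:graded-ring-periodic-locus`.  For a homogeneous
prime `p`: (a) the local period at `p` is nonzero iff some homogeneous element of
nonzero degree lies outside `p`; (b) for every `f ∈ 𝒜 n` with `n ≠ 0` and `f ∉ p`,
the local period at `p` is nonzero and divides `n`. -/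
theorem periodic_locus_basic_opens
    (A : Type*) [CommRing A] (𝒜 : ℤ → Submodule ℤ A) [GradedRing 𝒜]
    (p : Ideal A) (hp : p.IsPrime) (hhom : Ideal.IsHomogeneous 𝒜 p) :
    (localPeriod 𝒜 p ≠ 0 ↔ ∃ n : ℤ, n ≠ 0 ∧ ∃ f ∈ 𝒜 n, f ∉ p) ∧
    (∀ n : ℤ, n ≠ 0 → ∀ f ∈ 𝒜 n, f ∉ p →
      localPeriod 𝒜 p ≠ 0 ∧ (localPeriod 𝒜 p : ℤ) ∣ n) := by
  classical
  set S : Set ℕ := {d : ℕ | 0 < d ∧ ∃ m k : ℤ, ∃ a ∈ 𝒜 m, ∃ s ∈ 𝒜 k,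
    a ∉ p ∧ s ∉ p ∧ m - k = (d : ℤ)} with hSdef
  have hper : localPeriod 𝒜 p = sInf S := rfl
  have hone : (1 : A) ∉ p := fun h => hp.ne_top (Ideal.eq_top_of_isUnit_mem p h isUnit_one)
  have h1mem : (1 : A) ∈ 𝒜 0 := SetLike.one_mem_graded 𝒜
  set D : ℤ → Prop := fun n => ∃ m k : ℤ, ∃ a ∈ 𝒜 m, ∃ s ∈ 𝒜 k,
    a ∉ p ∧ s ∉ p ∧ m - k = n with hDdef
  have hD0 : D 0 := ⟨0, 0, 1, h1mem, 1, h1mem, hone, hone, by ring⟩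
  have hDadd : ∀ n₁ n₂, D n₁ → D n₂ → D (n₁ + n₂) := by
    rintro n₁ n₂ ⟨m₁, k₁, a₁, ha₁, s₁, hs₁, ha₁p, hs₁p, h₁⟩
      ⟨m₂, k₂, a₂, ha₂, s₂, hs₂, ha₂p, hs₂p, h₂⟩
    refine ⟨m₁ + m₂, k₁ + k₂, a₁ * a₂, SetLike.mul_mem_graded ha₁ ha₂,
      s₁ * s₂, SetLike.mul_mem_graded hs₁ hs₂, ?_, ?_, by omega⟩
    · intro h; rcases hp.mem_or_mem h with h | h
      · exact ha₁p h
      · exact ha₂p h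
    · intro h; rcases hp.mem_or_mem h with h | h
      · exact hs₁p h
      · exact hs₂p h
  have hDneg : ∀ n, D n → D (-n) := by
    rintro n ⟨m, k, a, ha, s, hs, hap, hsp, h⟩
    exact ⟨k, m, s, hs, a, ha, hsp, hap, by omega⟩
  have hDsmul : ∀ (q : ℤ) (n : ℤ), D n → D (q * n) := by
    intro q n hn
    induction q using Int.induction_on with
    | zero => simpa using hD0
    | succ i ih =>
        have h : ((i : ℤ) + 1) * n = (i : ℤ) * n + n := by ring
        rw [h]; exact hDadd _ _ ih hn
    | pred i ih =>
        have h : (-(i : ℤ) - 1) * n = -(i : ℤ) * n + -n := by ring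
        rw [h]; exact hDadd _ _ ih (hDneg n hn)
  have hDsub : ∀ n₁ n₂, D n₁ → D n₂ → D (n₁ - n₂) := by
    intro n₁ n₂ h₁ h₂
    have := hDadd n₁ (-n₂) h₁ (hDneg n₂ h₂)
    simpa [sub_eq_add_neg] using this
  have hmemS : ∀ n : ℤ, 0 < n → D n → n.toNat ∈ S := by
    intro n hpos hn
    refine ⟨by omega, ?_⟩
    rw [Int.toNat_of_nonneg hpos.le]
    exact hn
  -- from a homogeneous f of nonzero degree outside p, get D n
  have hDof : ∀ n : ℤ, ∀ f ∈ 𝒜 n, f ∉ p → D n := by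
    intro n f hf hfp
    exact ⟨n, 0, f, hf, 1, h1mem, hfp, hone, by ring⟩
  -- main divisibility fact
  have hmain : ∀ n : ℤ, n ≠ 0 → ∀ f ∈ 𝒜 n, f ∉ p →
      localPeriod 𝒜 p ≠ 0 ∧ (localPeriod 𝒜 p : ℤ) ∣ n := by
    intro n hn f hf hfp
    have hDn : D n := hDof n f hf hfp
    have habs : D |n| := by
      rcases abs_choice n with h | h
      · rwa [h]
      · rw [h]; exact hDneg n hDn
    have hSne : S.Nonempty := ⟨|n|.toNat, hmemS _ (abs_pos.mpr hn) habs⟩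
    have hsInf : sInf S ∈ S := Nat.sInf_mem hSne
    obtain ⟨hdpos, hd⟩ := hsInf
    have hd' : D ((sInf S : ℕ) : ℤ) := hd
    have hdne : localPeriod 𝒜 p ≠ 0 := by rw [hper]; omega
    refine ⟨hdne, ?_⟩
    have hdpos' : 0 < (((sInf S : ℕ) : ℤ)) := by exact_mod_cast hdpos
    -- consider r = n % ((sInf S : ℕ) : ℤ)
    have hr : D (n % ((sInf S : ℕ) : ℤ)) := by
      have h : n % ((sInf S : ℕ) : ℤ) = n - ((sInf S : ℕ) : ℤ) * (n / ((sInf S : ℕ) : ℤ)) :=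
        Int.emod_def n ((sInf S : ℕ) : ℤ)
      rw [h, mul_comm]
      exact hDsub _ _ hDn (hDsmul _ _ hd')
    have hrnonneg : 0 ≤ n % ((sInf S : ℕ) : ℤ) := Int.emod_nonneg n (by omega)
    have hrlt : n % ((sInf S : ℕ) : ℤ) < ((sInf S : ℕ) : ℤ) := Int.emod_lt_of_pos n hdpos'
    have hr0 : n % ((sInf S : ℕ) : ℤ) = 0 := by
      by_contra hr0
      have hrpos : 0 < n % ((sInf S : ℕ) : ℤ) := lt_of_le_of_ne hrnonneg (Ne.symm hr0)
      have : (n % ((sInf S : ℕ) : ℤ)).toNat ∈ S := hmemS _ hrpos hr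
      have hle := Nat.sInf_le this
      omega
    rw [hper]
    exact Int.dvd_of_emod_eq_zero hr0
  refine ⟨⟨?_, ?_⟩, hmain⟩
  · intro hne
    have hSne : S.Nonempty := by
      by_contra h
      rw [Set.not_nonempty_iff_eq_empty] at h
      rw [hper, h, Nat.sInf_empty] at hne
      exact hne rfl
    obtain ⟨hdpos, m, k, a, ha, s, hs, hap, hsp, hmk⟩ := Nat.sInf_mem hSne
    by_cases hm : m = 0
    · exact ⟨k, by omega, s, hs, hsp⟩
    · exact ⟨m, hm, a, ha, hap⟩
  · rintro ⟨n, hn, f, hf, hfp⟩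
    exact (hmain n hn f hf hfp).1
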